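/- Let K₁ and K₂ be compact Hausdorff topological spaces, each admitting a topological embedding into S³ whose image is a proper subset of S³. Then the disjoint union K₁ ⊕ K₂ admits a topological embedding into S³ whose image is a proper subset of S³. (This abstracts the gluing construction in Case 2 of the paper's proof of the compact-subset proposition, where two copies of S³, each containing one piece, are combined into a single S³ containing both.) -/

import Mathlib

/-- The 3-sphere: unit sphere in `EuclideanSpace ℝ (Fin 4)`, with subspace topology. -/
abbrev Sphere3 : Type := ↥(Metric.sphere (0 : EuclideanSpace ℝ (Fin 4)) 1)

open Metric Topology

noncomputable section

private lemma fact4 : Fact (Module.finrank ℝ (EuclideanSpace ℝ (Fin 4)) = 3 + 1) :=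
  ⟨by simp⟩

attribute [local instance] fact4

/-- Map a compact space into ℝ³ via an embedding into the sphere missing a point. -/
private lemma exists_cont_inj_real {K : Type} [TopologicalSpace K]
    (h : ∃ g : K → Sphere3, Topology.IsEmbedding g ∧ Set.range g ≠ Set.univ) :
    ∃ φ : K → EuclideanSpace ℝ (Fin 3), Continuous φ ∧ Function.Injective φ := by
  obtain ⟨g, hg, hne⟩ := h
  obtain ⟨p, hp⟩ : ∃ p : Sphere3, p ∉ Set.range g := by
    by_contra hc
    push_neg at hc
    exact hne (Set.eq_univ_of_forall hc)
  set e := stereographic' 3 p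
  have hsource : ∀ x : K, g x ∈ e.source := by
    intro x
    rw [stereographic'_source]
    exact fun hx => hp ⟨x, hx⟩
  refine ⟨fun x => e (g x), ?_, ?_⟩
  · exact e.continuousOn.comp_continuous hg.continuous hsource
  · intro a b hab
    exact hg.injective (e.injOn (hsource a) (hsource b) hab)

/-- If two compact Hausdorff spaces each embed into `S³` with image a proper subset of
`S³`, then their disjoint union embeds into `S³` with image a proper subset of `S³`. -/
theorem disjoint_union_embeds_in_sphere3
    (K₁ : Type) [TopologicalSpace K₁] [CompactSpace K₁] [T2Space K₁]
    (K₂ : Type) [TopologicalSpace K₂] [CompactSpace K₂] [T2Space K₂]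
    (h₁ : ∃ g : K₁ → Sphere3, Topology.IsEmbedding g ∧ Set.range g ≠ Set.univ)
    (h₂ : ∃ g : K₂ → Sphere3, Topology.IsEmbedding g ∧ Set.range g ≠ Set.univ) :
    ∃ g : K₁ ⊕ K₂ → Sphere3, Topology.IsEmbedding g ∧ Set.range g ≠ Set.univ := by
  obtain ⟨φ₁, hc₁, hi₁⟩ := exists_cont_inj_real h₁
  obtain ⟨φ₂, hc₂, hi₂⟩ := exists_cont_inj_real h₂
  -- bound both ranges
  obtain ⟨r₁, hr₁⟩ := ((isCompact_range hc₁).isBounded).subset_closedBall 0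
  obtain ⟨r₂, hr₂⟩ := ((isCompact_range hc₂).isBounded).subset_closedBall 0
  set R : ℝ := max (max r₁ r₂) 0 + 1 with hR
  have hRpos : 0 < R := by positivity
  have hb₁ : ∀ x, ‖φ₁ x‖ ≤ R := by
    intro x
    have := hr₁ ⟨x, rfl⟩
    rw [mem_closedBall, dist_zero_right] at this
    have : r₁ ≤ R := by simp [hR]; nlinarith [le_max_left r₁ r₂, le_max_left (max r₁ r₂) (0:ℝ)]
    have h2 := hr₁ (⟨x, rfl⟩ : φ₁ x ∈ Set.range φ₁)
    rw [mem_closedBall, dist_zero_right] at h2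
    linarith
  have hb₂ : ∀ x, ‖φ₂ x‖ ≤ R := by
    intro x
    have h2 := hr₂ (⟨x, rfl⟩ : φ₂ x ∈ Set.range φ₂)
    rw [mem_closedBall, dist_zero_right] at h2
    have : r₂ ≤ R := by nlinarith [le_max_right r₁ r₂, le_max_left (max r₁ r₂) (0:ℝ)]
    linarith
  -- translation vector
  set c : EuclideanSpace ℝ (Fin 3) := (3 * R) • EuclideanSpace.single (0 : Fin 3) (1 : ℝ)
    with hc
  have hcnorm : ‖c‖ = 3 * R := by
    rw [hc, norm_smul, EuclideanSpace.norm_single]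
    simp [abs_of_pos hRpos, abs_of_nonneg (by linarith : (0:ℝ) ≤ 3 * R)]
  -- the combined map into ℝ³
  set f : K₁ ⊕ K₂ → EuclideanSpace ℝ (Fin 3) := Sum.elim φ₁ (fun y => φ₂ y + c) with hf
  have hfc : Continuous f := Continuous.sumElim hc₁ (hc₂.add continuous_const)
  have hnorm_ne : ∀ a b, φ₁ a ≠ φ₂ b + c := by
    intro a b hab
    have h1 : ‖φ₂ b + c‖ ≥ 2 * R := by
      have h3 := norm_sub_le (φ₂ b + c) (φ₂ b)
      simp only [add_sub_cancel_left] at h3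
      have hx := hb₂ b
      rw [hcnorm] at h3
      linarith
    have h2 := hb₁ a
    rw [hab] at h2
    linarith
  have hfi : Function.Injective f := by
    rintro (a | a) (b | b) hab <;> simp only [hf, Sum.elim_inl, Sum.elim_inr] at hab
    · exact congrArg Sum.inl (hi₁ hab)
    · exact absurd hab (hnorm_ne a b)
    · exact absurd hab.symm (hnorm_ne b a)
    · exact congrArg Sum.inr (hi₂ (by simpa using hab))
  -- map back into the sphere
  have hq : EuclideanSpace.single (0 : Fin 4) (1 : ℝ) ∈
      Metric.sphere (0 : EuclideanSpace ℝ (Fin 4)) 1 := by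
    rw [mem_sphere_zero_iff_norm, EuclideanSpace.norm_single, norm_one]
  set q : Sphere3 := ⟨_, hq⟩
  set e := stereographic' 3 q with he
  have htarget : ∀ x, f x ∈ e.target := by
    intro x; rw [he, stereographic'_target]; trivial
  have gcont : Continuous fun x => e.symm (f x) :=
    e.symm.continuousOn.comp_continuous hfc htarget
  have ginj : Function.Injective fun x => e.symm (f x) := fun a b hab =>
    hfi (e.symm.injOn (htarget a) (htarget b) hab)
  refine ⟨fun x => e.symm (f x), (gcont.isClosedEmbedding ginj).toIsEmbedding, ?_⟩
  intro hu
  have : q ∈ Set.range fun x => e.symm (f x) := hu ▸ Set.mem_univ q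
  obtain ⟨x, hx⟩ := this
  have hmem := e.map_target (htarget x)
  rw [he, stereographic'_source] at hmem
  exact hmem hx
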